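/- Let $I$ and $J$ be disjoint compact intervals with non-empty interior in $\mathbb{R}$. For any compactly supported homeomorphism $g$ of $\mathbb{R}$, there exist homeomorphisms $g_1, g_3$ fixing pointwise a neighbourhood of $I$ and $g_2$ fixing pointwise a neighbourhood of $J$, all compactly supported, such that $g = g_1 g_2 g_3$. -/

import Mathlib

noncomputable section

/-- `g` pointwise fixes a neighbourhood of `A`. -/
def FixesNbhd (g : ℝ ≃ₜ ℝ) (A : Set ℝ) : Prop :=
  ∃ U : Set ℝ, IsOpen U ∧ A ⊆ U ∧ ∀ x ∈ U, g x = x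

/-- `g` is compactly supported. -/
def CompactSupp (g : ℝ ≃ₜ ℝ) : Prop := IsCompact (closure {x | g x ≠ x})

open Set Filter Function

lemma bdd_of_compactSupp (f : ℝ ≃ₜ ℝ) (hf : CompactSupp f) :
    ∃ M : ℝ, ∀ x : ℝ, x ∉ Set.Icc (-M) M → f x = x := by
  obtain ⟨r, hr⟩ := hf.isBounded.subset_closedBall 0
  refine ⟨r, fun x hx => ?_⟩
  by_contra h
  have hx' : x ∈ closure {x | f x ≠ x} := subset_closure h
  have := hr hx'
  rw [Real.closedBall_eq_Icc] at this
  simp only [zero_sub, zero_add] at this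
  exact hx this

lemma compactSupp_of_bdd (f : ℝ ≃ₜ ℝ) (M : ℝ)
    (h : ∀ x : ℝ, x ∉ Set.Icc (-M) M → f x = x) : CompactSupp f := by
  have hsub : {x | f x ≠ x} ⊆ Set.Icc (-M) M := fun x hx => by
    by_contra hc; exact hx (h x hc)
  exact IsCompact.of_isClosed_subset isCompact_Icc isClosed_closure
    (closure_minimal hsub isClosed_Icc)

lemma fix_symm (f : ℝ ≃ₜ ℝ) {x : ℝ} (h : f x = x) : f.symm x = x := by
  simpa using (congrArg f.symm h).symm

lemma compactSupp_symm (f : ℝ ≃ₜ ℝ) (hf : CompactSupp f) : CompactSupp f.symm := by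
  obtain ⟨M, hM⟩ := bdd_of_compactSupp f hf
  exact compactSupp_of_bdd _ M fun x hx => fix_symm f (hM x hx)

lemma fixesNbhd_symm (f : ℝ ≃ₜ ℝ) (A : Set ℝ) (hf : FixesNbhd f A) :
    FixesNbhd f.symm A := by
  obtain ⟨U, hU, hAU, hfix⟩ := hf
  exact ⟨U, hU, hAU, fun x hx => fix_symm f (hfix x hx)⟩

lemma strictMono_of_bdd (g : ℝ ≃ₜ ℝ) (M : ℝ)
    (hM : ∀ x : ℝ, x ∉ Set.Icc (-M) M → g x = x) : StrictMono g := by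
  have hmono : StrictMonoOn g (Set.Icc (|M| + 1) (|M| + 2)) := by
    intro x hx y hy hxy
    have hx1 : (g : ℝ → ℝ) x = x := hM x (by
      rw [Set.mem_Icc]; push_neg; intro h
      have := hx.1
      have h1 : M ≤ |M| := le_abs_self M
      linarith)
    have hy1 : (g : ℝ → ℝ) y = y := hM y (by
      rw [Set.mem_Icc]; push_neg; intro h
      have := hy.1
      have h1 : M ≤ |M| := le_abs_self M
      linarith)
    rw [hx1, hy1]; exact hxy
  exact Continuous.strictMonoOn_of_inj_rigidity g.continuous g.injective
    (by linarith : |M| + 1 < |M| + 2) hmono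

/-- A strictly monotone surjective map of `ℝ` as a homeomorphism. -/
def mkHomeo (f : ℝ → ℝ) (hm : StrictMono f) (hs : Function.Surjective f) : ℝ ≃ₜ ℝ :=
  (StrictMono.orderIsoOfSurjective f hm hs).toHomeomorph

@[simp] lemma mkHomeo_apply (f : ℝ → ℝ) (hm : StrictMono f) (hs : Function.Surjective f)
    (x : ℝ) : mkHomeo f hm hs x = f x := rfl

/-- Core construction: if `g b < c` then `g = k ∘ h` where `h` fixes a left ray past `b`
and `k` fixes a right ray before `c`. -/
lemma core (g : ℝ ≃ₜ ℝ) (hmono : StrictMono g) (M : ℝ)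
    (hM : ∀ x : ℝ, x ∉ Set.Icc (-M) M → g x = x)
    (b c : ℝ) (hbc : b < c) (hkey : g b < c) :
    ∃ h k : ℝ ≃ₜ ℝ, CompactSupp h ∧ CompactSupp k ∧
      (∃ p, b < p ∧ ∀ x < p, h x = x) ∧ (∃ q, q < c ∧ ∀ x > q, k x = x) ∧
      ∀ x, g x = k (h x) := by
  have hbsc : b < g.symm c := by
    have : g b < g (g.symm c) := by rwa [g.apply_symm_apply]
    exact hmono.lt_iff_lt.mp this
  set p : ℝ := min ((b + c) / 2) ((b + g.symm c) / 2) with hp_def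
  have hbp : b < p := lt_min (by linarith) (by linarith)
  have hpc : p < c := lt_of_le_of_lt (min_le_left _ _) (by linarith)
  have hpsc : p < g.symm c := lt_of_le_of_lt (min_le_right _ _) (by linarith)
  have hgp : g p < c := by
    have : g p < g (g.symm c) := hmono hpsc
    rwa [g.apply_symm_apply] at this
  set s : ℝ := (max p (g p) + c) / 2 with hs_def
  have hmax : max p (g p) < c := max_lt hpc hgp
  have hps : p < s := by have := le_max_left p (g p); simp only [hs_def]; linarith
  have hgps : g p < s := by have := le_max_right p (g p); simp only [hs_def]; linarith
  have hsc : s < c := by simp only [hs_def]; linarith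
  set t : ℝ := g.symm s with ht_def
  have hgt : g t = s := g.apply_symm_apply s
  have hpt : p < t := by
    have : g p < g t := by rw [hgt]; exact hgps
    exact hmono.lt_iff_lt.mp this
  have hpgt : p < g t := by rw [hgt]; exact hps
  set A : ℝ → ℝ := fun x => p + (x - p) * ((g t - p) / (t - p)) with hA_def
  have hslope : 0 < (g t - p) / (t - p) := div_pos (by linarith) (by linarith)
  have hAmono : StrictMono A := by
    intro x y hxy
    simp only [hA_def]
    have := mul_lt_mul_of_pos_right (sub_lt_sub_right hxy p) hslope
    linarith
  have hAp : A p = p := by simp [hA_def]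
  have hAt : A t = g t := by
    have hne : t - p ≠ 0 := ne_of_gt (by linarith)
    simp only [hA_def]
    field_simp
    ring
  set f : ℝ → ℝ := fun x => if x ≤ p then x else if x ≤ t then A x else g x with hf_def
  have hf_lo : ∀ x, x ≤ p → f x = x := fun x hx => by simp [hf_def, hx]
  have hf_mid : ∀ x, p < x → x ≤ t → f x = A x := fun x hx1 hx2 => by
    simp [hf_def, not_le.mpr hx1, hx2]
  have hf_hi : ∀ x, t < x → f x = g x := fun x hx => by
    have : ¬ x ≤ p := not_le.mpr (hpt.trans hx)
    simp [hf_def, this, not_le.mpr hx]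
  have hfmono : StrictMono f := by
    intro x y hxy
    rcases le_or_gt x p with hx1 | hx1
    · rw [hf_lo x hx1]
      rcases le_or_gt y p with hy1 | hy1
      · rw [hf_lo y hy1]; exact hxy
      · rcases le_or_gt y t with hy2 | hy2
        · rw [hf_mid y hy1 hy2]
          calc x ≤ p := hx1
            _ = A p := hAp.symm
            _ < A y := hAmono hy1
        · rw [hf_hi y hy2]
          have : g t < g y := hmono hy2
          linarith [hx1, hpgt]
    · rcases le_or_gt x t with hx2 | hx2
      · rw [hf_mid x hx1 hx2]
        rcases le_or_gt y t with hy2 | hy2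
        · rw [hf_mid y (hx1.trans hxy) hy2]; exact hAmono hxy
        · rw [hf_hi y hy2]
          have h1 : A x ≤ A t := hAmono.monotone hx2
          have h2 : g t < g y := hmono hy2
          rw [hAt] at h1; linarith
      · rw [hf_hi x hx2, hf_hi y (hx2.trans hxy)]
        exact hmono hxy
  have hAcont : Continuous A := by
    simp only [hA_def]; fun_prop
  have hfcont : Continuous f := by
    simp only [hf_def]
    apply Continuous.if_le
    · exact continuous_id
    · apply Continuous.if_le hAcont g.continuous continuous_id continuous_const
      intro x hx
      have hxt : x = t := hx
      rw [hxt]; exact hAt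
    · exact continuous_id
    · exact continuous_const
    · intro x hx
      have hxp : x = p := hx
      rw [hxp]
      simp [hAp, hpt.le]
  have hftop : Tendsto f atTop atTop := by
    have hev : f =ᶠ[atTop] id := by
      filter_upwards [eventually_ge_atTop (max t M + 1)] with x hx
      have hxt : t < x := lt_of_le_of_lt (le_max_left t M) (by linarith)
      have hxM : x ∉ Set.Icc (-M) M := by
        rw [Set.mem_Icc]; push_neg; intro _
        have := le_max_right t M; linarith
      rw [hf_hi x hxt, hM x hxM]; rfl
    exact Tendsto.congr' hev.symm tendsto_id
  have hfbot : Tendsto f atBot atBot := by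
    have hev : f =ᶠ[atBot] id := by
      filter_upwards [eventually_le_atBot p] with x hx
      rw [hf_lo x hx]; rfl
    exact Tendsto.congr' hev.symm tendsto_id
  have hfsurj : Surjective f := hfcont.surjective hftop hfbot
  set h : ℝ ≃ₜ ℝ := mkHomeo f hfmono hfsurj with hh_def
  set k : ℝ ≃ₜ ℝ := h.symm.trans g with hk_def
  have hhx : ∀ x, h x = f x := fun x => rfl
  have hkx : ∀ x, k x = g (h.symm x) := fun x => rfl
  set M0 : ℝ := max (max |p| |t|) M with hM0_def
  have hfM0 : ∀ x : ℝ, x ∉ Set.Icc (-M0) M0 → f x = x := by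
    intro x hx
    rw [Set.mem_Icc, not_and_or] at hx
    push_neg at hx
    rcases hx with hx | hx
    · apply hf_lo
      have h1 : |p| ≤ M0 := le_trans (le_max_left _ _) (le_max_left _ _)
      have h2 : -|p| ≤ p := neg_abs_le p
      linarith
    · have h1 : |t| ≤ M0 := le_trans (le_max_right _ _) (le_max_left _ _)
      have h2 : t ≤ |t| := le_abs_self t
      have hxt : t < x := by linarith
      rw [hf_hi x hxt]
      apply hM
      rw [Set.mem_Icc]; push_neg; intro _
      have := le_max_right (max |p| |t|) M
      linarith
  have hch : CompactSupp h := compactSupp_of_bdd h M0 fun x hx => hfM0 x hx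
  have hck : CompactSupp k := by
    apply compactSupp_of_bdd k M0
    intro x hx
    have h1 : h x = x := hfM0 x hx
    have h2 : h.symm x = x := fix_symm h h1
    have hxM : x ∉ Set.Icc (-M) M := by
      intro hmem
      apply hx
      have hr : M ≤ M0 := le_max_right (max |p| |t|) M
      rw [Set.mem_Icc] at hmem ⊢
      exact ⟨by linarith [hmem.1], by linarith [hmem.2]⟩
    rw [hkx, h2]
    exact hM x hxM
  refine ⟨h, k, hch, hck, ⟨p, hbp, fun x hx => hf_lo x hx.le⟩,
    ⟨g t, by rw [hgt]; exact hsc, ?_⟩, fun x => by rw [hkx, Homeomorph.symm_apply_apply]⟩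
  intro x hx
  have hsx : t < g.symm x := by
    apply hmono.lt_iff_lt.mp
    rw [g.apply_symm_apply x]
    exact hx
  have h1 : h (g.symm x) = x := by
    rw [hhx, hf_hi _ hsx, g.apply_symm_apply]
  have h2 : h.symm x = g.symm x := by
    conv_lhs => rw [← h1]
    rw [Homeomorph.symm_apply_apply]
  rw [hkx, h2, g.apply_symm_apply]

/-- Conjugation by negation. -/
def cng (f : ℝ ≃ₜ ℝ) : ℝ ≃ₜ ℝ :=
  (Homeomorph.neg ℝ).trans (f.trans (Homeomorph.neg ℝ))

@[simp] lemma cng_apply (f : ℝ ≃ₜ ℝ) (x : ℝ) : cng f x = -(f (-x)) := rfl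

lemma compactSupp_refl : CompactSupp (Homeomorph.refl ℝ) :=
  compactSupp_of_bdd _ 0 fun _ _ => rfl

lemma fixesNbhd_refl (A : Set ℝ) : FixesNbhd (Homeomorph.refl ℝ) A :=
  ⟨Set.univ, isOpen_univ, Set.subset_univ A, fun _ _ => rfl⟩

/-- Case A: `I = [a,b]` to the left of `J = [c,d]`, with `g b < c`. -/
lemma caseA (g : ℝ ≃ₜ ℝ) (hmono : StrictMono g) (M : ℝ)
    (hM : ∀ x : ℝ, x ∉ Set.Icc (-M) M → g x = x)
    (a b c d : ℝ) (hbc : b < c) (hkey : g b < c) :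
    ∃ h k : ℝ ≃ₜ ℝ, CompactSupp h ∧ CompactSupp k ∧
      FixesNbhd h (Set.Icc a b) ∧ FixesNbhd k (Set.Icc c d) ∧ ∀ x, g x = k (h x) := by
  obtain ⟨h, k, hch, hck, ⟨p, hbp, hp⟩, ⟨q, hqc, hq⟩, heq⟩ := core g hmono M hM b c hbc hkey
  refine ⟨h, k, hch, hck, ⟨Set.Iio p, isOpen_Iio, ?_, fun x hx => hp x hx⟩,
    ⟨Set.Ioi q, isOpen_Ioi, ?_, fun x hx => hq x hx⟩, heq⟩
  · intro x hx; exact lt_of_le_of_lt hx.2 hbp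
  · intro x hx; exact lt_of_lt_of_le hqc hx.1

/-- Case B: `J = [c,d]` to the left of `I = [a,b]`, with `d < g a`. -/
lemma caseB (g : ℝ ≃ₜ ℝ) (hmono : StrictMono g) (M : ℝ)
    (hM : ∀ x : ℝ, x ∉ Set.Icc (-M) M → g x = x)
    (a b c d : ℝ) (hda : d < a) (hkey : d < g a) :
    ∃ h k : ℝ ≃ₜ ℝ, CompactSupp h ∧ CompactSupp k ∧
      FixesNbhd h (Set.Icc a b) ∧ FixesNbhd k (Set.Icc c d) ∧ ∀ x, g x = k (h x) := by
  set g' : ℝ ≃ₜ ℝ := cng g with hg'_def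
  have hmono' : StrictMono g' := by
    intro x y hxy
    simp only [hg'_def, cng_apply]
    exact neg_lt_neg (hmono (neg_lt_neg hxy))
  have hM' : ∀ x : ℝ, x ∉ Set.Icc (-M) M → g' x = x := by
    intro x hx
    have hnx : -x ∉ Set.Icc (-M) M := by
      rw [Set.mem_Icc] at hx ⊢; push_neg at hx ⊢
      intro h1; rcases lt_or_ge x (-M) with h2 | h2
      · linarith
      · have := hx h2; linarith
    simp only [hg'_def, cng_apply, hM (-x) hnx, neg_neg]
  have hbc' : (-a : ℝ) < -d := by linarith
  have hkey' : g' (-a) < -d := by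
    simp only [hg'_def, cng_apply, neg_neg]
    linarith
  obtain ⟨h, k, hch, hck, ⟨p, hap, hp⟩, ⟨q, hqd, hq⟩, heq⟩ :=
    core g' hmono' M hM' (-a) (-d) hbc' hkey'
  refine ⟨cng h, cng k, ?_, ?_,
    ⟨Set.Ioi (-p), isOpen_Ioi, fun x hx => by simp only [Set.mem_Ioi]; linarith [hx.1],
      fun x hx => ?_⟩,
    ⟨Set.Iio (-q), isOpen_Iio, fun x hx => by simp only [Set.mem_Iio]; linarith [hx.2],
      fun x hx => ?_⟩, ?_⟩
  · obtain ⟨M1, hM1⟩ := bdd_of_compactSupp h hch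
    apply compactSupp_of_bdd _ (|M1|)
    intro x hx
    have hnx : -x ∉ Set.Icc (-M1) M1 := by
      rw [Set.mem_Icc] at hx ⊢; push_neg at hx ⊢
      intro h1
      have ha1 : M1 ≤ |M1| := le_abs_self M1
      have ha2 : -|M1| ≤ -M1 := neg_le_neg ha1
      rcases lt_or_ge x (-|M1|) with h2 | h2
      · linarith
      · have := hx h2; linarith
    simp only [cng_apply, hM1 (-x) hnx, neg_neg]
  · obtain ⟨M1, hM1⟩ := bdd_of_compactSupp k hck
    apply compactSupp_of_bdd _ (|M1|)
    intro x hx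
    have hnx : -x ∉ Set.Icc (-M1) M1 := by
      rw [Set.mem_Icc] at hx ⊢; push_neg at hx ⊢
      intro h1
      have ha1 : M1 ≤ |M1| := le_abs_self M1
      rcases lt_or_ge x (-|M1|) with h2 | h2
      · linarith
      · have := hx h2; linarith
    simp only [cng_apply, hM1 (-x) hnx, neg_neg]
  · rw [Set.mem_Ioi] at hx
    have : h (-x) = -x := hp (-x) (by linarith)
    simp only [cng_apply, this, neg_neg]
  · rw [Set.mem_Iio] at hx
    have : k (-x) = -x := hq (-x) (by linarith)
    simp only [cng_apply, this, neg_neg]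
  · intro x
    have := heq (-x)
    simp only [hg'_def, cng_apply, neg_neg] at this
    simp only [cng_apply, neg_neg]
    linarith [this]

/-- Fragmentation: if `I = [a,b]` and `J = [c,d]` are disjoint compact intervals with
non-empty interior, any compactly supported homeomorphism `g` of `ℝ` can be written
`g = g₁ g₂ g₃` with `g₁, g₃` compactly supported and fixing a neighbourhood of `I`, and
`g₂` compactly supported and fixing a neighbourhood of `J`. -/
theorem stmt5 (a b c d : ℝ) (hab : a < b) (hcd : c < d)
    (hdisj : Disjoint (Set.Icc a b) (Set.Icc c d))
    (g : ℝ ≃ₜ ℝ) (hg : CompactSupp g) :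
    ∃ g1 g2 g3 : ℝ ≃ₜ ℝ, CompactSupp g1 ∧ CompactSupp g2 ∧ CompactSupp g3 ∧
      FixesNbhd g1 (Set.Icc a b) ∧ FixesNbhd g2 (Set.Icc c d) ∧
      FixesNbhd g3 (Set.Icc a b) ∧ ∀ x : ℝ, g x = g1 (g2 (g3 x)) := by
  obtain ⟨M, hM⟩ := bdd_of_compactSupp g hg
  have hmono : StrictMono g := strictMono_of_bdd g M hM
  have hMsymm : ∀ x : ℝ, x ∉ Set.Icc (-M) M → g.symm x = x := fun x hx =>
    fix_symm g (hM x hx)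
  have hmonosymm : StrictMono g.symm := fun x y hxy => by
    apply hmono.lt_iff_lt.mp
    rwa [g.apply_symm_apply, g.apply_symm_apply]
  have hord : b < c ∨ d < a := by
    by_contra hcon
    push_neg at hcon
    obtain ⟨h1, h2⟩ := hcon
    have : max a c ∈ Set.Icc a b ∩ Set.Icc c d := by
      constructor <;> rw [Set.mem_Icc]
      · exact ⟨le_max_left a c, max_le hab.le h1⟩
      · exact ⟨le_max_right a c, max_le h2 hcd.le⟩
    exact Set.disjoint_left.mp hdisj this.1 this.2
  rcases hord with hbc | hda
  · by_cases hk : g b < c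
    · obtain ⟨h, k, hch, hck, hfh, hfk, heq⟩ := caseA g hmono M hM a b c d hbc hk
      exact ⟨Homeomorph.refl ℝ, k, h, compactSupp_refl, hck, hch,
        fixesNbhd_refl _, hfk, hfh, fun x => heq x⟩
    · have hk' : g.symm b < c := by
        by_contra hk2
        push_neg at hk2
        have h1 : g c ≤ g (g.symm b) := hmono.monotone hk2
        rw [g.apply_symm_apply] at h1
        have h2 : g b < g c := hmono hbc
        push_neg at hk
        linarith
      obtain ⟨h, k, hch, hck, hfh, hfk, heq⟩ :=
        caseA g.symm hmonosymm M hMsymm a b c d hbc hk'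
      refine ⟨h.symm, k.symm, Homeomorph.refl ℝ, compactSupp_symm h hch,
        compactSupp_symm k hck, compactSupp_refl, fixesNbhd_symm h _ hfh,
        fixesNbhd_symm k _ hfk, fixesNbhd_refl _, fun x => ?_⟩
      have h1 : g.symm (g x) = k (h (g x)) := heq (g x)
      rw [g.symm_apply_apply] at h1
      have h2 : k.symm x = h (g x) := by
        conv_lhs => rw [h1, Homeomorph.symm_apply_apply]
      show g x = h.symm (k.symm x)
      rw [h2, Homeomorph.symm_apply_apply]
  · by_cases hk : d < g a
    · obtain ⟨h, k, hch, hck, hfh, hfk, heq⟩ := caseB g hmono M hM a b c d hda hk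
      exact ⟨Homeomorph.refl ℝ, k, h, compactSupp_refl, hck, hch,
        fixesNbhd_refl _, hfk, hfh, fun x => heq x⟩
    · have hk' : d < g.symm a := by
        by_contra hk2
        push_neg at hk2
        have h1 : g (g.symm a) ≤ g d := hmono.monotone hk2
        rw [g.apply_symm_apply] at h1
        have h2 : g d < g a := hmono hda
        push_neg at hk
        linarith
      obtain ⟨h, k, hch, hck, hfh, hfk, heq⟩ :=
        caseB g.symm hmonosymm M hMsymm a b c d hda hk'
      refine ⟨h.symm, k.symm, Homeomorph.refl ℝ, compactSupp_symm h hch,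
        compactSupp_symm k hck, compactSupp_refl, fixesNbhd_symm h _ hfh,
        fixesNbhd_symm k _ hfk, fixesNbhd_refl _, fun x => ?_⟩
      have h1 : g.symm (g x) = k (h (g x)) := heq (g x)
      rw [g.symm_apply_apply] at h1
      have h2 : k.symm x = h (g x) := by
        conv_lhs => rw [h1, Homeomorph.symm_apply_apply]
      show g x = h.symm (k.symm x)
      rw [h2, Homeomorph.symm_apply_apply]
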